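/- arXiv:1808.10723 — 2 statements merged into one kernel-verified Lean document; each statement's English description precedes it below -/
import Mathlib

section
/- Let A and B be abelian groups. Assign to every tetrahedron t (4-element subset of the vertex set {1,2,3,4,5,6} of a 5-simplex) elements x_t, y_t ∈ A and ξ_t, η_t ∈ B, and suppose that for each of the six pentachora u_k (the 5-element subsets of {1,...,6}, where u_k omits vertex k) both colorings are permitted, i.e. 𝐲_u = ℛ𝐱_u and 𝛈_u = ℛ𝛏_u. Then the alternating sum Σ_{k=1}^{6} (−1)^k Φ_{u_k}(𝐱,𝛏) vanishes in A ⊗_ℤ B, where for a pentachoron u = ijklm (i<j<k<l<m), Φ_u(𝐱,𝛏) = (x_{jklm} − 2x_{iklm} + x_{ijlm} + x_{ijkm} − 2x_{ijkl}) ⊗ (ξ_{iklm} − ξ_{ijlm} + ξ_{ijkl}). (This is the hexagon 4-cocycle property of Φ.) -/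
/- Hexagon 4-cocycle property of the bilinear form Φ on the 5-simplex
   with vertex set `Fin 6` (vertices 1,…,6 of the paper are 0,…,5 here). -/

open TensorProduct

/-- The matrix ℛ from the paper. -/
def Rmat : Matrix (Fin 5) (Fin 5) ℤ :=
  !![0, -2, 1, 1, -2;
     0, -1, 0, 1, -1;
     -1, 2, -2, 0, 1;
     -1, 3, -2, -1, 2;
     0, 1, -1, 0, 0]

/-- The five tetrahedral faces `jklm, iklm, ijlm, ijkm, ijkl` of the
pentachoron `ijklm = abcde`. -/
def pentFaces (a b c d e : Fin 6) : Fin 5 → Finset (Fin 6) :=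
  ![{b, c, d, e}, {a, c, d, e}, {a, b, d, e}, {a, b, c, e}, {a, b, c, d}]

/-- A coloring `(x_t, y_t)` of the 3-faces of the pentachoron `abcde` is
permitted iff `𝐲_u = ℛ 𝐱_u`, the integer matrix acting on the abelian group `A`. -/
def IsPermitted {A : Type*} [AddCommGroup A] (x y : Finset (Fin 6) → A)
    (a b c d e : Fin 6) : Prop :=
  ∀ i : Fin 5,
    y (pentFaces a b c d e i) = ∑ j : Fin 5, Rmat i j • x (pentFaces a b c d e j)

/-- The hexagon 4-cocycle
`Φ_u(𝐱,𝛏) = (x_{jklm} − 2x_{iklm} + x_{ijlm} + x_{ijkm} − 2x_{ijkl}) ⊗ (ξ_{iklm} − ξ_{ijlm} + ξ_{ijkl})`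
for the pentachoron `u = ijklm = abcde`, with values in `A ⊗[ℤ] B`. -/
noncomputable def Phi {A B : Type*} [AddCommGroup A] [AddCommGroup B]
    (x : Finset (Fin 6) → A) (ξ : Finset (Fin 6) → B) (a b c d e : Fin 6) :
    A ⊗[ℤ] B :=
  (x {b, c, d, e} - 2 • x {a, c, d, e} + x {a, b, d, e} + x {a, b, c, e}
      - 2 • x {a, b, c, d}) ⊗ₜ[ℤ]
    (ξ {a, c, d, e} - ξ {a, b, d, e} + ξ {a, b, c, d})

set_option maxHeartbeats 4000000 in
set_option maxRecDepth 16000 in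
/-- The alternating sum `Σ_{k=1}^{6} (−1)^k Φ_{u_k}(𝐱,𝛏)` over the six pentachora
of the 5-simplex (where `u_k` omits vertex `k`) vanishes, provided both colorings
`(x,y)` and `(ξ,η)` are permitted on all six pentachora. -/
theorem phi_is_hexagon_cocycle {A B : Type*} [AddCommGroup A] [AddCommGroup B]
    (x y : Finset (Fin 6) → A) (ξ η : Finset (Fin 6) → B)
    (hx1 : IsPermitted x y 1 2 3 4 5) (hx2 : IsPermitted x y 0 2 3 4 5)
    (hx3 : IsPermitted x y 0 1 3 4 5) (hx4 : IsPermitted x y 0 1 2 4 5)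
    (hx5 : IsPermitted x y 0 1 2 3 5) (hx6 : IsPermitted x y 0 1 2 3 4)
    (hξ1 : IsPermitted ξ η 1 2 3 4 5) (hξ2 : IsPermitted ξ η 0 2 3 4 5)
    (hξ3 : IsPermitted ξ η 0 1 3 4 5) (hξ4 : IsPermitted ξ η 0 1 2 4 5)
    (hξ5 : IsPermitted ξ η 0 1 2 3 5) (hξ6 : IsPermitted ξ η 0 1 2 3 4) :
    -Phi x ξ 1 2 3 4 5 + Phi x ξ 0 2 3 4 5 - Phi x ξ 0 1 3 4 5
      + Phi x ξ 0 1 2 4 5 - Phi x ξ 0 1 2 3 5 + Phi x ξ 0 1 2 3 4 = 0 := by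
  have e0_0 := hx1 0
  have e0_1 := hx1 1
  have e0_2 := hx1 2
  have e0_4 := hx1 4
  have e1_0 := hx2 0
  have e1_1 := hx2 1
  have e1_4 := hx2 4
  have e2_0 := hx3 0
  have e2_1 := hx3 1
  have e3_0 := hx4 0
  have e5_0 := hx6 0
  have e5_1 := hx6 1
  simp only [Rmat, pentFaces, Fin.sum_univ_five, Fin.isValue, Matrix.cons_val', Matrix.cons_val_zero, Matrix.cons_val_one, Matrix.head_cons, Matrix.head_fin_const, Matrix.cons_val_fin_one, Matrix.empty_val', Matrix.cons_val_two, Matrix.tail_cons, Matrix.cons_val_three, Matrix.cons_val_four, Matrix.of_apply, neg_smul, one_smul, zero_smul, neg_neg, zero_add, add_zero] at e0_0 e0_1 e0_2 e0_4 e1_0 e1_1 e1_4 e2_0 e2_1 e3_0 e5_0 e5_1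
  have f0_0 := hξ1 0
  have f0_1 := hξ1 1
  have f0_2 := hξ1 2
  have f0_4 := hξ1 4
  have f1_0 := hξ2 0
  have f1_1 := hξ2 1
  have f1_4 := hξ2 4
  have f2_0 := hξ3 0
  have f2_1 := hξ3 1
  have f3_0 := hξ4 0
  have f5_0 := hξ6 0
  have f5_1 := hξ6 1
  simp only [Rmat, pentFaces, Fin.sum_univ_five, Fin.isValue, Matrix.cons_val', Matrix.cons_val_zero, Matrix.cons_val_one, Matrix.head_cons, Matrix.head_fin_const, Matrix.cons_val_fin_one, Matrix.empty_val', Matrix.cons_val_two, Matrix.tail_cons, Matrix.cons_val_three, Matrix.cons_val_four, Matrix.of_apply, neg_smul, one_smul, zero_smul, neg_neg, zero_add, add_zero] at f0_0 f0_1 f0_2 f0_4 f1_0 f1_1 f1_4 f2_0 f2_1 f3_0 f5_0 f5_1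
  have He0 : x ({2, 3, 4, 5} : Finset (Fin 6)) - x ({0, 2, 4, 5} : Finset (Fin 6)) + x ({0, 2, 3, 4} : Finset (Fin 6)) + x ({0, 1, 2, 5} : Finset (Fin 6)) - (3 : ℤ) • x ({0, 1, 2, 4} : Finset (Fin 6)) + (2 : ℤ) • x ({0, 1, 2, 3} : Finset (Fin 6)) = 0 := by
    linear_combination (norm := module) (e0_0 - e1_0) - (e0_1 - e2_0) + (e0_2 - e3_0) - (e0_4 - e5_0) + (e1_1 - e2_1)
  have He1 : x ({1, 3, 4, 5} : Finset (Fin 6)) - x ({1, 2, 3, 5} : Finset (Fin 6)) - (3 : ℤ) • x ({0, 2, 4, 5} : Finset (Fin 6)) + (5 : ℤ) • x ({0, 2, 3, 4} : Finset (Fin 6)) + (2 : ℤ) • x ({0, 1, 4, 5} : Finset (Fin 6)) + x ({0, 1, 3, 5} : Finset (Fin 6)) - (4 : ℤ) • x ({0, 1, 3, 4} : Finset (Fin 6)) - (3 : ℤ) • x ({0, 1, 2, 4} : Finset (Fin 6)) + (4 : ℤ) • x ({0, 1, 2, 3} : Finset (Fin 6)) = 0 := by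
    linear_combination (norm := module) -(e0_0 - e1_0) + (2 : ℤ) • (e0_1 - e2_0) - (e0_4 - e5_0) - (e1_1 - e2_1) - (2 : ℤ) • (e1_4 - e5_1)
  have He2 : x ({1, 2, 4, 5} : Finset (Fin 6)) - x ({1, 2, 3, 5} : Finset (Fin 6)) - (3 : ℤ) • x ({0, 2, 4, 5} : Finset (Fin 6)) + (3 : ℤ) • x ({0, 2, 3, 4} : Finset (Fin 6)) + (2 : ℤ) • x ({0, 1, 4, 5} : Finset (Fin 6)) + x ({0, 1, 3, 5} : Finset (Fin 6)) - (3 : ℤ) • x ({0, 1, 3, 4} : Finset (Fin 6)) - (2 : ℤ) • x ({0, 1, 2, 4} : Finset (Fin 6)) + (2 : ℤ) • x ({0, 1, 2, 3} : Finset (Fin 6)) = 0 := by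
    linear_combination (norm := module) -(e0_0 - e1_0) + (2 : ℤ) • (e0_1 - e2_0) - (e1_1 - e2_1) - (2 : ℤ) • (e1_4 - e5_1)
  have He3 : x ({1, 2, 3, 4} : Finset (Fin 6)) + x ({0, 2, 4, 5} : Finset (Fin 6)) - (3 : ℤ) • x ({0, 2, 3, 4} : Finset (Fin 6)) - x ({0, 1, 4, 5} : Finset (Fin 6)) + (2 : ℤ) • x ({0, 1, 3, 4} : Finset (Fin 6)) + x ({0, 1, 2, 4} : Finset (Fin 6)) - (2 : ℤ) • x ({0, 1, 2, 3} : Finset (Fin 6)) = 0 := by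
    linear_combination (norm := module) (e0_0 - e1_0) - (e0_1 - e2_0) + (e0_4 - e5_0) + (e1_1 - e2_1)
  have He4 : x ({0, 3, 4, 5} : Finset (Fin 6)) - x ({0, 2, 4, 5} : Finset (Fin 6)) + x ({0, 2, 3, 4} : Finset (Fin 6)) - x ({0, 1, 2, 4} : Finset (Fin 6)) + x ({0, 1, 2, 3} : Finset (Fin 6)) = 0 := by
    linear_combination (norm := module) -(e1_4 - e5_1)
  have He5 : x ({0, 2, 3, 5} : Finset (Fin 6)) - x ({0, 2, 3, 4} : Finset (Fin 6)) - x ({0, 1, 3, 5} : Finset (Fin 6)) + x ({0, 1, 3, 4} : Finset (Fin 6)) = 0 := by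
    linear_combination (norm := module) -(e1_1 - e2_1)
  have Hf0 : ξ ({2, 3, 4, 5} : Finset (Fin 6)) - ξ ({0, 2, 4, 5} : Finset (Fin 6)) + ξ ({0, 2, 3, 4} : Finset (Fin 6)) + ξ ({0, 1, 2, 5} : Finset (Fin 6)) - (3 : ℤ) • ξ ({0, 1, 2, 4} : Finset (Fin 6)) + (2 : ℤ) • ξ ({0, 1, 2, 3} : Finset (Fin 6)) = 0 := by
    linear_combination (norm := module) (f0_0 - f1_0) - (f0_1 - f2_0) + (f0_2 - f3_0) - (f0_4 - f5_0) + (f1_1 - f2_1)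
  have Hf1 : ξ ({1, 3, 4, 5} : Finset (Fin 6)) - ξ ({1, 2, 3, 5} : Finset (Fin 6)) - (3 : ℤ) • ξ ({0, 2, 4, 5} : Finset (Fin 6)) + (5 : ℤ) • ξ ({0, 2, 3, 4} : Finset (Fin 6)) + (2 : ℤ) • ξ ({0, 1, 4, 5} : Finset (Fin 6)) + ξ ({0, 1, 3, 5} : Finset (Fin 6)) - (4 : ℤ) • ξ ({0, 1, 3, 4} : Finset (Fin 6)) - (3 : ℤ) • ξ ({0, 1, 2, 4} : Finset (Fin 6)) + (4 : ℤ) • ξ ({0, 1, 2, 3} : Finset (Fin 6)) = 0 := by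
    linear_combination (norm := module) -(f0_0 - f1_0) + (2 : ℤ) • (f0_1 - f2_0) - (f0_4 - f5_0) - (f1_1 - f2_1) - (2 : ℤ) • (f1_4 - f5_1)
  have Hf2 : ξ ({1, 2, 4, 5} : Finset (Fin 6)) - ξ ({1, 2, 3, 5} : Finset (Fin 6)) - (3 : ℤ) • ξ ({0, 2, 4, 5} : Finset (Fin 6)) + (3 : ℤ) • ξ ({0, 2, 3, 4} : Finset (Fin 6)) + (2 : ℤ) • ξ ({0, 1, 4, 5} : Finset (Fin 6)) + ξ ({0, 1, 3, 5} : Finset (Fin 6)) - (3 : ℤ) • ξ ({0, 1, 3, 4} : Finset (Fin 6)) - (2 : ℤ) • ξ ({0, 1, 2, 4} : Finset (Fin 6)) + (2 : ℤ) • ξ ({0, 1, 2, 3} : Finset (Fin 6)) = 0 := by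
    linear_combination (norm := module) -(f0_0 - f1_0) + (2 : ℤ) • (f0_1 - f2_0) - (f1_1 - f2_1) - (2 : ℤ) • (f1_4 - f5_1)
  have Hf3 : ξ ({1, 2, 3, 4} : Finset (Fin 6)) + ξ ({0, 2, 4, 5} : Finset (Fin 6)) - (3 : ℤ) • ξ ({0, 2, 3, 4} : Finset (Fin 6)) - ξ ({0, 1, 4, 5} : Finset (Fin 6)) + (2 : ℤ) • ξ ({0, 1, 3, 4} : Finset (Fin 6)) + ξ ({0, 1, 2, 4} : Finset (Fin 6)) - (2 : ℤ) • ξ ({0, 1, 2, 3} : Finset (Fin 6)) = 0 := by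
    linear_combination (norm := module) (f0_0 - f1_0) - (f0_1 - f2_0) + (f0_4 - f5_0) + (f1_1 - f2_1)
  have Hf4 : ξ ({0, 3, 4, 5} : Finset (Fin 6)) - ξ ({0, 2, 4, 5} : Finset (Fin 6)) + ξ ({0, 2, 3, 4} : Finset (Fin 6)) - ξ ({0, 1, 2, 4} : Finset (Fin 6)) + ξ ({0, 1, 2, 3} : Finset (Fin 6)) = 0 := by
    linear_combination (norm := module) -(f1_4 - f5_1)
  have Hf5 : ξ ({0, 2, 3, 5} : Finset (Fin 6)) - ξ ({0, 2, 3, 4} : Finset (Fin 6)) - ξ ({0, 1, 3, 5} : Finset (Fin 6)) + ξ ({0, 1, 3, 4} : Finset (Fin 6)) = 0 := by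
    linear_combination (norm := module) -(f1_1 - f2_1)
  have key : -Phi x ξ 1 2 3 4 5 + Phi x ξ 0 2 3 4 5 - Phi x ξ 0 1 3 4 5 + Phi x ξ 0 1 2 4 5 - Phi x ξ 0 1 2 3 5 + Phi x ξ 0 1 2 3 4 = (x ({2, 3, 4, 5} : Finset (Fin 6)) - x ({0, 2, 4, 5} : Finset (Fin 6)) + x ({0, 2, 3, 4} : Finset (Fin 6)) + x ({0, 1, 2, 5} : Finset (Fin 6)) - (3 : ℤ) • x ({0, 1, 2, 4} : Finset (Fin 6)) + (2 : ℤ) • x ({0, 1, 2, 3} : Finset (Fin 6))) ⊗ₜ[ℤ] (-ξ ({1, 3, 4, 5} : Finset (Fin 6)) + ξ ({1, 2, 4, 5} : Finset (Fin 6)) - ξ ({1, 2, 3, 4} : Finset (Fin 6)) + ξ ({0, 3, 4, 5} : Finset (Fin 6)) - ξ ({0, 2, 4, 5} : Finset (Fin 6)) + ξ ({0, 2, 3, 4} : Finset (Fin 6))) + (x ({1, 3, 4, 5} : Finset (Fin 6)) - x ({1, 2, 3, 5} : Finset (Fin 6)) - (3 : ℤ) • x ({0, 2, 4, 5} : Finset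 (Fin 6)) + (5 : ℤ) • x ({0, 2, 3, 4} : Finset (Fin 6)) + (2 : ℤ) • x ({0, 1, 4, 5} : Finset (Fin 6)) + x ({0, 1, 3, 5} : Finset (Fin 6)) - (4 : ℤ) • x ({0, 1, 3, 4} : Finset (Fin 6)) - (3 : ℤ) • x ({0, 1, 2, 4} : Finset (Fin 6)) + (4 : ℤ) • x ({0, 1, 2, 3} : Finset (Fin 6))) ⊗ₜ[ℤ] ((2 : ℤ) • ξ ({1, 3, 4, 5} : Finset (Fin 6)) - (2 : ℤ) • ξ ({1, 2, 4, 5} : Finset (Fin 6)) + (2 : ℤ) • ξ ({1, 2, 3, 4} : Finset (Fin 6)) - ξ ({0, 3, 4, 5} : Finset (Fin 6)) + ξ ({0, 1, 4, 5} : Finset (Fin 6)) - ξ ({0, 1, 3, 4} : Finset (Fin 6))) + (x ({1, 2, 4, 5} : Finset (Fin 6)) - x ({1, 2, 3, 5} : Finset (Fin 6)) - (3 : ℤ) • x ({0, 2, 4, 5} : Finset (Fin 6)) + (3 : ℤ) • x ({0, 2, 3, 4} : Finset (Fin 6)) + (2 : ℤ) • x ({0, 1, 4, 5} : Finset (Fin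 6)) + x ({0, 1, 3, 5} : Finset (Fin 6)) - (3 : ℤ) • x ({0, 1, 3, 4} : Finset (Fin 6)) - (2 : ℤ) • x ({0, 1, 2, 4} : Finset (Fin 6)) + (2 : ℤ) • x ({0, 1, 2, 3} : Finset (Fin 6))) ⊗ₜ[ℤ] (-ξ ({1, 3, 4, 5} : Finset (Fin 6)) + ξ ({1, 2, 4, 5} : Finset (Fin 6)) - ξ ({1, 2, 3, 4} : Finset (Fin 6)) + ξ ({0, 2, 4, 5} : Finset (Fin 6)) - ξ ({0, 1, 4, 5} : Finset (Fin 6)) + ξ ({0, 1, 2, 4} : Finset (Fin 6))) + (x ({1, 2, 3, 4} : Finset (Fin 6)) + x ({0, 2, 4, 5} : Finset (Fin 6)) - (3 : ℤ) • x ({0, 2, 3, 4} : Finset (Fin 6)) - x ({0, 1, 4, 5} : Finset (Fin 6)) + (2 : ℤ) • x ({0, 1, 3, 4} : Finset (Fin 6)) + x ({0, 1, 2, 4} : Finset (Fin 6)) - (2 : ℤ) • x ({0, 1, 2, 3} : Finset (Fin 6))) ⊗ₜ[ℤ] ((2 : ℤ) • ξ ({1, 3, 4, 5} : Finset (Fin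 6)) - (2 : ℤ) • ξ ({1, 2, 4, 5} : Finset (Fin 6)) + (2 : ℤ) • ξ ({1, 2, 3, 4} : Finset (Fin 6)) + ξ ({0, 2, 3, 4} : Finset (Fin 6)) - ξ ({0, 1, 3, 4} : Finset (Fin 6)) + ξ ({0, 1, 2, 3} : Finset (Fin 6))) + (x ({0, 3, 4, 5} : Finset (Fin 6)) - x ({0, 2, 4, 5} : Finset (Fin 6)) + x ({0, 2, 3, 4} : Finset (Fin 6)) - x ({0, 1, 2, 4} : Finset (Fin 6)) + x ({0, 1, 2, 3} : Finset (Fin 6))) ⊗ₜ[ℤ] ((2 : ℤ) • ξ ({0, 2, 4, 5} : Finset (Fin 6)) - (2 : ℤ) • ξ ({0, 2, 3, 4} : Finset (Fin 6)) - (2 : ℤ) • ξ ({0, 1, 4, 5} : Finset (Fin 6)) + (2 : ℤ) • ξ ({0, 1, 3, 4} : Finset (Fin 6))) + (x ({0, 2, 3, 5} : Finset (Fin 6)) - x ({0, 2, 3, 4} : Finset (Fin 6)) - x ({0, 1, 3, 5} : Finset (Fin 6)) + x ({0, 1, 3, 4} : Finset (Fin 6))) ⊗ₜ[ℤ] (ξ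 ({0, 3, 4, 5} : Finset (Fin 6)) - ξ ({0, 2, 4, 5} : Finset (Fin 6)) + (2 : ℤ) • ξ ({0, 2, 3, 5} : Finset (Fin 6)) + ξ ({0, 2, 3, 4} : Finset (Fin 6)) - (2 : ℤ) • ξ ({0, 1, 3, 5} : Finset (Fin 6)) + (2 : ℤ) • ξ ({0, 1, 2, 3} : Finset (Fin 6))) + (-x ({0, 1, 3, 5} : Finset (Fin 6)) + x ({0, 1, 3, 4} : Finset (Fin 6)) + x ({0, 1, 2, 5} : Finset (Fin 6)) - x ({0, 1, 2, 4} : Finset (Fin 6))) ⊗ₜ[ℤ] (ξ ({1, 3, 4, 5} : Finset (Fin 6)) - ξ ({1, 2, 3, 5} : Finset (Fin 6)) - (3 : ℤ) • ξ ({0, 2, 4, 5} : Finset (Fin 6)) + (5 : ℤ) • ξ ({0, 2, 3, 4} : Finset (Fin 6)) + (2 : ℤ) • ξ ({0, 1, 4, 5} : Finset (Fin 6)) + ξ ({0, 1, 3, 5} : Finset (Fin 6)) - (4 : ℤ) • ξ ({0, 1, 3, 4} : Finset (Fin 6)) - (3 : ℤ) • ξ ({0, 1, 2, 4} : Finset (Fin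 6)) + (4 : ℤ) • ξ ({0, 1, 2, 3} : Finset (Fin 6))) + (x ({0, 1, 3, 5} : Finset (Fin 6)) - x ({0, 1, 3, 4} : Finset (Fin 6)) - x ({0, 1, 2, 5} : Finset (Fin 6)) + x ({0, 1, 2, 4} : Finset (Fin 6))) ⊗ₜ[ℤ] (ξ ({1, 2, 4, 5} : Finset (Fin 6)) - ξ ({1, 2, 3, 5} : Finset (Fin 6)) - (3 : ℤ) • ξ ({0, 2, 4, 5} : Finset (Fin 6)) + (3 : ℤ) • ξ ({0, 2, 3, 4} : Finset (Fin 6)) + (2 : ℤ) • ξ ({0, 1, 4, 5} : Finset (Fin 6)) + ξ ({0, 1, 3, 5} : Finset (Fin 6)) - (3 : ℤ) • ξ ({0, 1, 3, 4} : Finset (Fin 6)) - (2 : ℤ) • ξ ({0, 1, 2, 4} : Finset (Fin 6)) + (2 : ℤ) • ξ ({0, 1, 2, 3} : Finset (Fin 6))) + (-x ({0, 1, 3, 5} : Finset (Fin 6)) + x ({0, 1, 3, 4} : Finset (Fin 6)) + x ({0, 1, 2, 5} : Finset (Fin 6)) - x ({0, 1, 2, 4} : Finset (Fin 6))) ⊗ₜ[ℤ]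 (ξ ({1, 2, 3, 4} : Finset (Fin 6)) + ξ ({0, 2, 4, 5} : Finset (Fin 6)) - (3 : ℤ) • ξ ({0, 2, 3, 4} : Finset (Fin 6)) - ξ ({0, 1, 4, 5} : Finset (Fin 6)) + (2 : ℤ) • ξ ({0, 1, 3, 4} : Finset (Fin 6)) + ξ ({0, 1, 2, 4} : Finset (Fin 6)) - (2 : ℤ) • ξ ({0, 1, 2, 3} : Finset (Fin 6))) + (-x ({1, 2, 3, 5} : Finset (Fin 6)) - x ({0, 2, 4, 5} : Finset (Fin 6)) + (3 : ℤ) • x ({0, 2, 3, 4} : Finset (Fin 6)) + x ({0, 1, 4, 5} : Finset (Fin 6)) + x ({0, 1, 3, 5} : Finset (Fin 6)) - (3 : ℤ) • x ({0, 1, 3, 4} : Finset (Fin 6)) - x ({0, 1, 2, 5} : Finset (Fin 6)) + (2 : ℤ) • x ({0, 1, 2, 3} : Finset (Fin 6))) ⊗ₜ[ℤ] (ξ ({0, 3, 4, 5} : Finset (Fin 6)) - ξ ({0, 2, 4, 5} : Finset (Fin 6)) + ξ ({0, 2, 3, 4} : Finset (Fin 6)) - ξ ({0, 1, 2, 4}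 : Finset (Fin 6)) + ξ ({0, 1, 2, 3} : Finset (Fin 6))) + (-x ({1, 2, 3, 5} : Finset (Fin 6)) + (2 : ℤ) • x ({0, 2, 3, 4} : Finset (Fin 6)) + x ({0, 1, 3, 5} : Finset (Fin 6)) - (2 : ℤ) • x ({0, 1, 3, 4} : Finset (Fin 6)) - x ({0, 1, 2, 5} : Finset (Fin 6)) + (2 : ℤ) • x ({0, 1, 2, 3} : Finset (Fin 6))) ⊗ₜ[ℤ] (ξ ({0, 2, 3, 5} : Finset (Fin 6)) - ξ ({0, 2, 3, 4} : Finset (Fin 6)) - ξ ({0, 1, 3, 5} : Finset (Fin 6)) + ξ ({0, 1, 3, 4} : Finset (Fin 6))) := by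
    simp only [Phi, two_smul, TensorProduct.tmul_add, TensorProduct.tmul_sub, TensorProduct.add_tmul, TensorProduct.sub_tmul, TensorProduct.neg_tmul, TensorProduct.tmul_neg, TensorProduct.smul_tmul, TensorProduct.tmul_smul]
    module
  rw [key, He0, He1, He2, He3, He4, He5, Hf1, Hf2, Hf3, Hf4, Hf5]
  simp
end

section
/- The bilinear hexagon 4-cocycle Φ is cohomologically nontrivial over ℤ: there is no function c : ℤ × ℤ × ℤ × ℤ → ℤ such that for every permitted double coloring of the single pentachoron u = 12345 (i.e. for all x_t, y_t, ξ_t, η_t ∈ ℤ assigned to the five tetrahedra t of u with 𝐲_u = ℛ𝐱_u and 𝛈_u = ℛ𝛏_u) one has Φ_u(𝐱,𝛏) = Σ_{k=1}^{5} (−1)^{k+1} c(x_{t_k}, y_{t_k}, ξ_{t_k}, η_{t_k}), where (t_1,...,t_5) = (2345, 1345, 1245, 1235, 1234) and Φ_u(𝐱,𝛏) = (x_{2345} − 2x_{1345} + x_{1245} + x_{1235} − 2x_{1234})·(ξ_{1345} − ξ_{1245} + ξ_{1234}). -/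
/-- The bilinear hexagon 4-cocycle Φ is cohomologically nontrivial over ℤ:
there is no 3-cochain `c`, a function of the permitted coloring
`(x_t, y_t, ξ_t, η_t)` of a single tetrahedron, whose coboundary — the
alternating sum over the five 3-faces `(t_1,…,t_5) = (2345,1345,1245,1235,1234)`
of the pentachoron `u = 12345` (indexed here by `Fin 5`) — equals
`Φ_u(𝐱,𝛏) = (x_{2345} − 2x_{1345} + x_{1245} + x_{1235} − 2x_{1234}) ·
(ξ_{1345} − ξ_{1245} + ξ_{1234})` for every permitted double coloring,
i.e. for all `x, ξ : Fin 5 → ℤ`, with `y = ℛx` and `η = ℛξ`. -/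
theorem phi_not_a_coboundary :
    ¬ ∃ c : ℤ × ℤ × ℤ × ℤ → ℤ,
      ∀ x ξ : Fin 5 → ℤ,
        (x 0 - 2 * x 1 + x 2 + x 3 - 2 * x 4) * (ξ 1 - ξ 2 + ξ 4) =
          ∑ k : Fin 5, (-1 : ℤ) ^ (k : ℕ) *
            c (x k, Rmat.mulVec x k, ξ k, Rmat.mulVec ξ k) := by
  rintro ⟨c, h⟩
  have h0 := h ![0,0,0,0,0] ![0,0,0,0,0]
  have h1 := h ![0,0,0,0,0] ![0,0,0,1,0]
  have h2 := h ![0,0,0,0,0] ![0,1,1,0,0]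
  have h3 := h ![0,0,0,0,0] ![0,1,1,1,0]
  have h4 := h ![0,0,0,0,0] ![1,0,0,0,1]
  have h5 := h ![0,0,0,0,1] ![0,0,0,0,0]
  have h6 := h ![0,0,0,0,1] ![0,0,0,0,1]
  have h7 := h ![0,0,0,0,1] ![0,0,0,1,1]
  have h8 := h ![0,0,0,0,1] ![0,0,1,1,1]
  have h9 := h ![0,0,0,0,1] ![0,1,0,1,0]
  have h10 := h ![0,0,0,0,1] ![0,1,1,1,1]
  have h11 := h ![0,0,0,0,1] ![1,0,0,0,0]
  have h12 := h ![0,0,0,0,1] ![1,0,1,0,1]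
  have h13 := h ![0,0,0,0,1] ![1,1,0,0,0]
  have h14 := h ![0,0,0,0,1] ![1,1,1,0,0]
  have h15 := h ![0,0,0,0,1] ![1,1,1,1,0]
  have h16 := h ![0,0,0,0,1] ![1,1,1,1,1]
  have h17 := h ![0,0,0,1,0] ![0,1,1,0,0]
  have h18 := h ![0,0,0,1,0] ![0,1,1,1,0]
  have h19 := h ![0,0,0,1,0] ![1,0,0,0,0]
  have h20 := h ![0,0,0,1,0] ![1,0,0,0,1]
  have h21 := h ![0,0,0,1,0] ![1,0,0,1,1]
  have h22 := h ![0,0,0,1,0] ![1,0,1,0,1]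
  have h23 := h ![0,0,0,1,1] ![0,0,0,0,1]
  have h24 := h ![0,0,0,1,1] ![0,1,0,1,0]
  have h25 := h ![0,0,0,1,1] ![0,1,1,0,0]
  have h26 := h ![0,0,0,1,1] ![0,1,1,1,0]
  have h27 := h ![0,0,0,1,1] ![0,1,1,1,1]
  have h28 := h ![0,0,0,1,1] ![1,0,0,0,1]
  have h29 := h ![0,0,0,1,1] ![1,0,0,1,1]
  have h30 := h ![0,0,0,1,1] ![1,1,0,0,0]
  have h31 := h ![0,0,1,0,0] ![0,0,0,0,0]
  have h32 := h ![0,0,1,0,0] ![0,0,0,1,0]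
  norm_num [Fin.sum_univ_five, Rmat, Matrix.mulVec, dotProduct, Matrix.cons_val_two, Matrix.cons_val_three, Matrix.cons_val_four,
    show ((3:Fin 5):ℕ)=3 from rfl, show ((4:Fin 5):ℕ)=4 from rfl] at h0 h1 h2 h3 h4 h5 h6 h7 h8 h9 h10 h11 h12 h13 h14 h15 h16 h17 h18 h19 h20 h21 h22 h23 h24 h25 h26 h27 h28 h29 h30 h31 h32
  have contra : (1:ℤ) = 0 := by linear_combination (-2) * h0 + (2) * h1 + (2) * h2 + (-1) * h3 + (-1) * h4 + (2) * h5 + (-1) * h6 + (1) * h7 + (-1) * h8 + (-1) * h9 + (1) * h10 + (-1) * h11 + (1) * h12 + (1) * h13 + (-2) * h14 + (1) * h15 + (-1) * h16 + (1) * h17 + (-2) * h18 + (-1) * h19 + (-1) * h20 + (2) * h21 + (1) * h22 + (1) * h23 + (1) * h24 + (-1) * h25 + (1) * h26 + (-1) * h27 + (1) * h28 + (-1) * h29 + (-1) * h30 + (1) * h31 + (-1) * h32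
  exact absurd contra (by norm_num)
end
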